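/- The bipartite graph of the Rothe diagram D(w) is a forest if and only if w avoids the patterns 3412, 4312, 3421, and 4321. -/

import Mathlib

/-- The Rothe diagram of `w`: `(a, b) ∈ D(w)` iff `b = w j` for some `j > a` with `w j < w a`. -/
def Rothe {n : ℕ} (w : Equiv.Perm (Fin n)) (c : Fin n × Fin n) : Prop :=
  ∃ j : Fin n, c.1 < j ∧ w j < w c.1 ∧ c.2 = w j

/-- The bipartite graph of a diagram `D ⊆ α × β`: vertices are rows (`Sum.inl`) and
columns (`Sum.inr`), with an edge joining row `i` to column `j` for each cell `(i,j) ∈ D`. -/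
def diagGraph {α β : Type*} (D : Set (α × β)) : SimpleGraph (α ⊕ β) where
  Adj a b := ∃ i j, (i, j) ∈ D ∧
    ((a = Sum.inl i ∧ b = Sum.inr j) ∨ (a = Sum.inr j ∧ b = Sum.inl i))
  symm := by
    constructor
    rintro a b ⟨i, j, hij, h | h⟩
    · exact ⟨i, j, hij, Or.inr ⟨h.2, h.1⟩⟩
    · exact ⟨i, j, hij, Or.inl ⟨h.2, h.1⟩⟩
  loopless := by
    constructor
    rintro a ⟨i, j, hij, ⟨h1, h2⟩ | ⟨h1, h2⟩⟩ <;> rw [h1] at h2 <;> simp at h2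

/-- `w` contains the pattern `v` (on `k` letters). -/
def Contains {n k : ℕ} (w : Equiv.Perm (Fin n)) (v : Fin k → Fin k) : Prop :=
  ∃ f : Fin k → Fin n, StrictMono f ∧ ∀ a b, v a < v b ↔ w (f a) < w (f b)

open SimpleGraph Walk

lemma rothe_iff {n : ℕ} (w : Equiv.Perm (Fin n)) (i c : Fin n) :
    Rothe w (i, c) ↔ c < w i ∧ i < w.symm c := by
  constructor
  · rintro ⟨j, hj, hw, hc⟩
    subst hc
    simpa using ⟨hw, hj⟩
  · rintro ⟨h1, h2⟩
    exact ⟨w.symm c, h2, by simpa using h1, by simp⟩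

lemma adj_inl {α β : Type*} {D : Set (α × β)} {i : α} {x : α ⊕ β}
    (h : (diagGraph D).Adj (Sum.inl i) x) : ∃ j, x = Sum.inr j ∧ (i, j) ∈ D := by
  obtain ⟨a, b, hab, ⟨h1, h2⟩ | ⟨h1, h2⟩⟩ := h
  · exact ⟨b, h2, by simpa [Sum.inl.injEq] using (Sum.inl.inj h1) ▸ hab⟩
  · simp at h1
lemma adj_inr {α β : Type*} {D : Set (α × β)} {j : β} {x : α ⊕ β}
    (h : (diagGraph D).Adj (Sum.inr j) x) : ∃ i, x = Sum.inl i ∧ (i, j) ∈ D := by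
  obtain ⟨a, b, hab, ⟨h1, h2⟩ | ⟨h1, h2⟩⟩ := h
  · simp at h1
  · exact ⟨a, h2, by simpa using (Sum.inr.inj h1) ▸ hab⟩

lemma adj_mk {α β : Type*} {D : Set (α × β)} {i : α} {j : β} (h : (i, j) ∈ D) :
    (diagGraph D).Adj (Sum.inl i) (Sum.inr j) := ⟨i, j, h, Or.inl ⟨rfl, rfl⟩⟩

lemma getLast?_cons_ne {α : Type*} (a : α) (l : List α) (h : l ≠ []) :
    (a :: l).getLast? = l.getLast? := by
  cases l with
  | nil => simp at h
  | cons b m => simp [List.getLast?_cons_cons]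

lemma tail_rev_nodup {α : Type*} {v : α} {t : List α} (ht : t.Nodup) (hne : t ≠ [])
    (hlast : t.getLast hne = v) : ((v :: t).reverse.tail).Nodup := by
  have hdrop : t.dropLast ++ [v] = t := by rw [← hlast]; exact List.dropLast_append_getLast hne
  have hrev : t.reverse = v :: t.dropLast.reverse := by
    conv_lhs => rw [← hdrop]; simp
  have heq : (v :: t).reverse.tail = t.dropLast.reverse ++ [v] := by
    rw [List.reverse_cons, hrev]; simp
  rw [heq, List.Perm.nodup_iff ((List.reverse_perm t.dropLast).append_right [v]), hdrop]
  exact ht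

lemma isCycle_reverse {V : Type*} {G : SimpleGraph V} {v : V} {p : G.Walk v v}
    (h : p.IsCycle) : p.reverse.IsCycle := by
  rw [Walk.isCycle_def]
  refine ⟨IsTrail.reverse p h.isCircuit.isTrail, ?_, ?_⟩
  · intro hnil
    apply h.ne_nil
    have := congrArg Walk.reverse hnil
    simpa using this
  · rw [Walk.support_reverse]
    have hcons : p.support = v :: p.support.tail := Walk.support_eq_cons p
    have hne : p.support.tail ≠ [] := by
      cases p with
      | nil => exact absurd rfl h.ne_nil
      | cons h' q => simpa using q.support_ne_nil
    have hlast : p.support.tail.getLast hne = v := by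
      have h2 : p.support.getLast? = some v := by
        rw [List.getLast?_eq_getLast p.support_ne_nil, p.getLast_support]
      rw [hcons, getLast?_cons_ne _ _ hne] at h2
      have h3 := List.getLast?_eq_getLast hne
      rw [h3] at h2
      exact Option.some.inj h2
    rw [hcons]
    exact tail_rev_nodup h.support_nodup hne hlast

lemma first_steps {α β : Type*} {D : Set (α × β)} {i : α}
    (c : (diagGraph D).Walk (Sum.inl i) (Sum.inl i)) (hc : c.IsCycle) :
    ∃ (p : β) (a : α), a ≠ i ∧ (i, p) ∈ D ∧ (a, p) ∈ D ∧ Sum.inl a ∈ c.support ∧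
      c.edges.head? = some s(Sum.inl i, Sum.inr p) := by
  have hlen := hc.three_le_length
  cases c with
  | nil => simp at hlen
  | cons h1 p1 =>
    obtain ⟨p, rfl, hip⟩ := adj_inl h1
    cases p1 with
    | cons h2 p2 =>
      obtain ⟨a, rfl, hap⟩ := adj_inr h2
      refine ⟨p, a, ?_, hip, hap, ?_, by simp⟩
      · intro hai
        subst hai
        have hnd : p2.support.Nodup := by
          have := hc.support_nodup
          simp only [Walk.support_cons, List.tail_cons, List.nodup_cons] at this
          exact this.2
        have hnil : p2 = Walk.nil := (Walk.isPath_iff_eq_nil (p := p2)).mp (Walk.IsPath.mk' hnd)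
        rw [hnil] at hlen
        simp at hlen
      · simp [Walk.support_cons, p2.start_mem_support]

lemma extract_rect {n : ℕ} {D : Set (Fin n × Fin n)}
    (h : ¬ (diagGraph D).IsAcyclic) :
    ∃ i a b p q : Fin n, p ≠ q ∧ a < i ∧ b < i ∧
      (i, p) ∈ D ∧ (i, q) ∈ D ∧ (a, p) ∈ D ∧ (b, q) ∈ D := by
  classical
  unfold SimpleGraph.IsAcyclic at h
  push_neg at h
  obtain ⟨v, c, hc⟩ := h
  have hrow : ∃ i0 : Fin n, Sum.inl i0 ∈ c.support := by
    cases c with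
    | nil => exact absurd rfl hc.ne_nil
    | cons h1 p1 =>
      cases v with
      | inl i0 => exact ⟨i0, Walk.start_mem_support _⟩
      | inr j =>
        obtain ⟨i0, heq, _⟩ := adj_inr h1
        refine ⟨i0, ?_⟩
        rw [Walk.support_cons]
        exact List.mem_cons_of_mem _ (heq ▸ Walk.start_mem_support p1)
  let S : Finset (Fin n) := Finset.univ.filter (fun r => Sum.inl r ∈ c.support.toFinset)
  have hS : S.Nonempty := ⟨hrow.choose, by simp [S, hrow.choose_spec]⟩
  set i := S.max' hS with hidef
  have hmem : Sum.inl i ∈ c.support := by have := S.max'_mem hS; rw [← hidef] at this; simpa [S] using this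
  have hle : ∀ r, Sum.inl r ∈ c.support → r ≤ i := fun r hr => S.le_max' r (by simp [S, hr])
  set c' := c.rotate _ hmem with hc'def
  have hc' : c'.IsCycle := hc.rotate hmem
  have htrans : ∀ z, z ∈ c'.support → z ∈ c.support := by
    intro z hz
    rw [Walk.support_eq_cons c'] at hz
    rcases List.mem_cons.mp hz with rfl | hz'
    · exact hmem
    · have hperm := (Walk.support_rotate c _ hmem).perm
      exact List.mem_of_mem_tail (hperm.mem_iff.mp hz')
  obtain ⟨p, a, hai, hip, hap, hasup, hpedge⟩ := first_steps c' hc'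
  obtain ⟨q, b, hbi, hiq, hbq, hbsup, hqedge⟩ := first_steps c'.reverse (isCycle_reverse hc')
  have ha : a < i := lt_of_le_of_ne (hle a (htrans _ hasup)) hai
  have hb : b < i := by
    have hbs : Sum.inl b ∈ c'.support := by
      rw [Walk.support_reverse] at hbsup; exact List.mem_reverse.mp hbsup
    exact lt_of_le_of_ne (hle b (htrans _ hbs)) hbi
  refine ⟨i, a, b, p, q, ?_, ha, hb, hip, hiq, hap, hbq⟩
  intro hpq
  subst hpq
  rw [Walk.edges_reverse, List.head?_reverse] at hqedge
  obtain ⟨rest, hrest⟩ : ∃ rest, c'.edges = s(Sum.inl i, Sum.inr p) :: rest := by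
    cases he : c'.edges with
    | nil => rw [he] at hpedge; simp at hpedge
    | cons x r =>
      rw [he] at hpedge
      simp only [List.head?_cons, Option.some.injEq] at hpedge
      exact ⟨r, by rw [hpedge]⟩
  have hrne : rest ≠ [] := by
    intro h0
    have hlen3 := hc'.three_le_length
    have hlene : c'.edges.length = c'.length := Walk.length_edges c'
    rw [hrest, h0] at hlene
    simp at hlene
    omega
  have hmemrest : s(Sum.inl i, Sum.inr p) ∈ rest := by
    rw [hrest, getLast?_cons_ne _ _ hrne] at hqedge
    have h5 : rest.getLast hrne = s(Sum.inl i, Sum.inr p) := by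
      rw [List.getLast?_eq_getLast hrne] at hqedge
      exact Option.some.inj hqedge
    exact h5 ▸ List.getLast_mem hrne
  have hnd := hc'.isCircuit.isTrail.edges_nodup
  rw [hrest] at hnd
  exact (List.nodup_cons.mp hnd).1 hmemrest

lemma contains_of_config {n : ℕ} (w : Equiv.Perm (Fin n)) {x1 x2 x3 x4 : Fin n}
    (h12 : x1 < x2) (h23 : x2 < x3) (h34 : x3 < x4)
    (h31 : w x3 < w x1) (h32 : w x3 < w x2) (h41 : w x4 < w x1) (h42 : w x4 < w x2) :
    Contains w ![2, 3, 0, 1] ∨ Contains w ![3, 2, 0, 1] ∨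
      Contains w ![2, 3, 1, 0] ∨ Contains w ![3, 2, 1, 0] := by
  set f : Fin 4 → Fin n := fun c => if c.val = 0 then x1 else if c.val = 1 then x2
      else if c.val = 2 then x3 else x4 with hf
  have hmono : StrictMono f := by
    intro a b hab
    fin_cases a <;> fin_cases b <;>
      simp only [f, Fin.lt_def] at * <;> norm_num <;> omega
  have hveq : ∀ (y1 y2 y3 y4 : Fin 4) (a : Fin 4), (![y1, y2, y3, y4] : Fin 4 → Fin 4) a =
      if a.val = 0 then y1 else if a.val = 1 then y2 else if a.val = 2 then y3 else y4 := by
    decide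
  have hne12 : w x1 ≠ w x2 := fun h => absurd (w.injective h) (ne_of_lt h12)
  have hne34 : w x3 ≠ w x4 := fun h => absurd (w.injective h) (ne_of_lt h34)
  rcases lt_or_gt_of_ne hne12 with hw12 | hw21 <;> rcases lt_or_gt_of_ne hne34 with hw34 | hw43
  · refine Or.inl ⟨f, hmono, fun a b => ?_⟩
    fin_cases a <;> fin_cases b <;> simp only [f, hveq, Fin.lt_def] at * <;> norm_num <;> omega
  · refine Or.inr (Or.inr (Or.inl ⟨f, hmono, fun a b => ?_⟩))
    fin_cases a <;> fin_cases b <;> simp only [f, hveq, Fin.lt_def] at * <;> norm_num <;> omega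
  · refine Or.inr (Or.inl ⟨f, hmono, fun a b => ?_⟩)
    fin_cases a <;> fin_cases b <;> simp only [f, hveq, Fin.lt_def] at * <;> norm_num <;> omega
  · refine Or.inr (Or.inr (Or.inr ⟨f, hmono, fun a b => ?_⟩))
    fin_cases a <;> fin_cases b <;> simp only [f, hveq, Fin.lt_def] at * <;> norm_num <;> omega

lemma config_of_contains {n : ℕ} (w : Equiv.Perm (Fin n)) {v : Fin 4 → Fin 4}
    (hv : v = ![2, 3, 0, 1] ∨ v = ![3, 2, 0, 1] ∨ v = ![2, 3, 1, 0] ∨ v = ![3, 2, 1, 0])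
    (h : Contains w v) :
    ∃ x1 x2 x3 x4 : Fin n, x1 < x2 ∧ x2 < x3 ∧ x3 < x4 ∧
      w x3 < w x1 ∧ w x3 < w x2 ∧ w x4 < w x1 ∧ w x4 < w x2 := by
  obtain ⟨f, hmono, hiff⟩ := h
  refine ⟨f 0, f 1, f 2, f 3, hmono (by decide), hmono (by decide), hmono (by decide),
    ?_, ?_, ?_, ?_⟩ <;>
  · rw [← hiff]
    rcases hv with rfl | rfl | rfl | rfl <;> decide

lemma config_of_rect {n : ℕ} (w : Equiv.Perm (Fin n)) {i a b p q : Fin n} (hpq : p ≠ q)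
    (ha : a < i) (hb : b < i) (hip : Rothe w (i, p)) (hiq : Rothe w (i, q))
    (hap : Rothe w (a, p)) (hbq : Rothe w (b, q)) :
    ∃ x1 x2 x3 x4 : Fin n, x1 < x2 ∧ x2 < x3 ∧ x3 < x4 ∧
      w x3 < w x1 ∧ w x3 < w x2 ∧ w x4 < w x1 ∧ w x4 < w x2 := by
  rw [rothe_iff] at hip hiq hap hbq
  set P := w.symm p with hP
  set Q := w.symm q with hQ
  have hwP : w P = p := w.apply_symm_apply p
  have hwQ : w Q = q := w.apply_symm_apply q
  have hPQ : P ≠ Q := fun h => hpq (by rw [← hwP, ← hwQ, h])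
  rcases lt_or_gt_of_ne hpq with hpq' | hqp'
  · -- p < q : use rows b < i, columns P, Q in position order
    rcases lt_or_gt_of_ne hPQ with hPQ' | hQP'
    · exact ⟨b, i, P, Q, hb, hip.2, hPQ', by rw [hwP]; exact hpq'.trans hbq.1,
        by rw [hwP]; exact hip.1, by rw [hwQ]; exact hbq.1, by rw [hwQ]; exact hiq.1⟩
    · exact ⟨b, i, Q, P, hb, hiq.2, hQP', by rw [hwQ]; exact hbq.1, by rw [hwQ]; exact hiq.1,
        by rw [hwP]; exact hpq'.trans hbq.1, by rw [hwP]; exact hip.1⟩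
  · -- q < p : use rows a < i
    rcases lt_or_gt_of_ne hPQ with hPQ' | hQP'
    · exact ⟨a, i, P, Q, ha, hip.2, hPQ', by rw [hwP]; exact hap.1, by rw [hwP]; exact hip.1,
        by rw [hwQ]; exact hqp'.trans hap.1, by rw [hwQ]; exact hiq.1⟩
    · exact ⟨a, i, Q, P, ha, hiq.2, hQP', by rw [hwQ]; exact hqp'.trans hap.1,
        by rw [hwQ]; exact hiq.1, by rw [hwP]; exact hap.1, by rw [hwP]; exact hip.1⟩

lemma not_acyclic_of_config {n : ℕ} (w : Equiv.Perm (Fin n)) {x1 x2 x3 x4 : Fin n}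
    (h12 : x1 < x2) (h23 : x2 < x3) (h34 : x3 < x4)
    (h31 : w x3 < w x1) (h32 : w x3 < w x2) (h41 : w x4 < w x1) (h42 : w x4 < w x2) :
    ¬ (diagGraph {c : Fin n × Fin n | Rothe w c}).IsAcyclic := by
  intro hac
  set D : Set (Fin n × Fin n) := {c | Rothe w c} with hD
  have c13 : (x1, w x3) ∈ D := ⟨x3, h12.trans h23, h31, rfl⟩
  have c14 : (x1, w x4) ∈ D := ⟨x4, (h12.trans h23).trans h34, h41, rfl⟩
  have c23 : (x2, w x3) ∈ D := ⟨x3, h23, h32, rfl⟩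
  have c24 : (x2, w x4) ∈ D := ⟨x4, h23.trans h34, h42, rfl⟩
  have hne12 : x1 ≠ x2 := ne_of_lt h12
  have hne34 : w x3 ≠ w x4 := fun h => absurd (w.injective h) (ne_of_lt h34)
  have hne21 : x2 ≠ x1 := Ne.symm hne12
  have hne43 : w x4 ≠ w x3 := Ne.symm hne34
  let a1 := adj_mk c13
  let a2 := (adj_mk c23).symm
  let a3 := adj_mk c24
  let a4 := (adj_mk c14).symm
  let walk : (diagGraph D).Walk (Sum.inl x1) (Sum.inl x1) :=
    Walk.cons a1 (Walk.cons a2 (Walk.cons a3 (Walk.cons a4 Walk.nil)))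
  apply hac walk
  rw [Walk.isCycle_def]
  refine ⟨⟨?_⟩, by simp [walk], ?_⟩
  · show walk.edges.Nodup
    simp only [walk, Walk.edges_cons, Walk.edges_nil, List.nodup_cons, List.mem_cons,
      List.mem_singleton, List.not_mem_nil, not_false_iff, List.nodup_nil, and_true,
      Sym2.eq_iff]
    push_neg
    refine ⟨⟨?_, ?_⟩, ⟨?_, ?_⟩, ?_⟩ <;> simp_all
  · show walk.support.tail.Nodup
    simp only [walk, Walk.support_cons, Walk.support_nil, List.tail_cons]
    simp [hne12, hne34, Ne.symm hne12, Ne.symm hne34]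

/-- The bipartite graph of the Rothe diagram `D(w)` is a forest iff `w` avoids the
patterns `3412`, `4312`, `3421` and `4321` (written zero-based below). -/
theorem stmt10 {n : ℕ} (w : Equiv.Perm (Fin n)) :
    (diagGraph {c : Fin n × Fin n | Rothe w c}).IsAcyclic ↔
      (¬ Contains w ![2, 3, 0, 1] ∧ ¬ Contains w ![3, 2, 0, 1] ∧
        ¬ Contains w ![2, 3, 1, 0] ∧ ¬ Contains w ![3, 2, 1, 0]) := by
  constructor
  · intro hac
    refine ⟨?_, ?_, ?_, ?_⟩ <;> intro hcont
    · obtain ⟨x1, x2, x3, x4, h12, h23, h34, h31, h32, h41, h42⟩ :=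
        config_of_contains w (Or.inl rfl) hcont
      exact not_acyclic_of_config w h12 h23 h34 h31 h32 h41 h42 hac
    · obtain ⟨x1, x2, x3, x4, h12, h23, h34, h31, h32, h41, h42⟩ :=
        config_of_contains w (Or.inr (Or.inl rfl)) hcont
      exact not_acyclic_of_config w h12 h23 h34 h31 h32 h41 h42 hac
    · obtain ⟨x1, x2, x3, x4, h12, h23, h34, h31, h32, h41, h42⟩ :=
        config_of_contains w (Or.inr (Or.inr (Or.inl rfl))) hcont
      exact not_acyclic_of_config w h12 h23 h34 h31 h32 h41 h42 hac
    · obtain ⟨x1, x2, x3, x4, h12, h23, h34, h31, h32, h41, h42⟩ :=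
        config_of_contains w (Or.inr (Or.inr (Or.inr rfl))) hcont
      exact not_acyclic_of_config w h12 h23 h34 h31 h32 h41 h42 hac
  · rintro ⟨h1, h2, h3, h4⟩
    by_contra hna
    obtain ⟨i, a, b, p, q, hpq, ha, hb, hip, hiq, hap, hbq⟩ := extract_rect hna
    obtain ⟨x1, x2, x3, x4, h12, h23, h34, h31, h32, h41, h42⟩ :=
      config_of_rect w hpq ha hb hip hiq hap hbq
    rcases contains_of_config w h12 h23 h34 h31 h32 h41 h42 with hc | hc | hc | hc
    exacts [h1 hc, h2 hc, h3 hc, h4 hc]
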